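/- For every integer n ≥ 3 with n ≠ 5, Left wins the Classic Variant of the Mixed Deletion Game on the cycle C_n regardless of which player moves first. -/

import Mathlib

namespace SetTheory

/-- Pre-games, as in Mathlib's former `SetTheory.PGame`. -/
inductive PGame : Type (u + 1)
  | mk : ∀ α β : Type u, (α → PGame) → (β → PGame) → PGame

namespace PGame

instance : Zero PGame := ⟨⟨PEmpty, PEmpty, PEmpty.elim, PEmpty.elim⟩⟩

instance : One PGame := ⟨⟨PUnit, PEmpty, fun _ => 0, PEmpty.elim⟩⟩

/-- The pair `(x ≤ y, x ⧏ y)`, defined by simultaneous recursion. -/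
noncomputable def leLF : PGame.{u} → PGame.{u} → Prop × Prop :=
  fun x => PGame.rec (motive := fun _ => PGame.{u} → Prop × Prop)
    (fun _ xr _ _ IHxL IHxR y =>
      PGame.rec (motive := fun _ => Prop × Prop)
        (fun yl yr yL yR IHyL IHyR =>
          ((∀ i, (IHxL i (mk yl yr yL yR)).2) ∧ (∀ j, (IHyR j).2),
           (∃ i, (IHyL i).1) ∨ (∃ j : xr, (IHxR j (mk yl yr yL yR)).1))) y) x

noncomputable instance : LE PGame := ⟨fun x y => (leLF x y).1⟩

/-- The less or fuzzy relation on pre-games. -/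
def LF (x y : PGame) : Prop := ¬y ≤ x

infixl:50 " ⧏ " => SetTheory.PGame.LF

noncomputable instance : LT PGame := ⟨fun x y => x ≤ y ∧ x ⧏ y⟩

/-- The negation of a pre-game. -/
def neg : PGame → PGame
  | ⟨l, r, L, R⟩ => ⟨r, l, fun i => neg (R i), fun i => neg (L i)⟩

instance : Neg PGame := ⟨neg⟩

/-- Auxiliary for the sum: recursion on the right summand, given the sums for the
options of the left summand `⟨xl, xr, _, _⟩`. -/
def addAux (xl xr : Type u) (fL : xl → PGame.{u} → PGame.{u}) (fR : xr → PGame.{u} → PGame.{u}) :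
    PGame.{u} → PGame.{u}
  | mk yl yr yL yR =>
    mk (xl ⊕ yl) (xr ⊕ yr)
      (Sum.rec (fun i => fL i (mk yl yr yL yR)) (fun i => addAux xl xr fL fR (yL i)))
      (Sum.rec (fun i => fR i (mk yl yr yL yR)) (fun i => addAux xl xr fL fR (yR i)))

/-- The sum of two pre-games. -/
def add : PGame.{u} → PGame.{u} → PGame.{u}
  | mk xl xr xL xR => addAux xl xr (fun i => add (xL i)) (fun i => add (xR i))

instance : Add PGame := ⟨add⟩

/-- The pre-game `star`. -/
def star : PGame.{u} := ⟨PUnit, PUnit, fun _ => 0, fun _ => 0⟩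

/-- The pre-game `nim o`. -/
noncomputable def nim (o : Ordinal.{u}) : PGame.{u} :=
  ⟨o.ToType, o.ToType,
    fun x => nim ((Ordinal.ToType.mk (o := o)).symm x).val,
    fun x => nim ((Ordinal.ToType.mk (o := o)).symm x).val⟩
termination_by o
decreasing_by all_goals exact ((Ordinal.ToType.mk (o := o)).symm x).prop

end PGame

end SetTheory

open SetTheory PGame

namespace SetTheory.PGame

theorem leLF_zero_aux (y : PGame) :
    ((leLF 0 y).2 ↔ ¬ (leLF y 0).1) ∧ ((leLF y 0).2 ↔ ¬ (leLF 0 y).1) := by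
  induction y with
  | mk yl yr yL yR IHL IHR =>
    constructor
    · show ((∃ i, (leLF 0 (yL i)).1) ∨ (∃ j : PEmpty, _)) ↔
        ¬ ((∀ i, (leLF (yL i) 0).2) ∧ (∀ j : PEmpty, _))
      constructor
      · rintro (⟨i, hi⟩ | ⟨j, _⟩)
        · intro h; exact ((IHL i).2.1 (h.1 i)) hi
        · exact j.elim
      · intro h
        left
        by_contra hc
        push_neg at hc
        exact h ⟨fun i => (IHL i).2.2 (hc i), fun j => j.elim⟩
    · show ((∃ i : PEmpty, _) ∨ (∃ j, (leLF (yR j) 0).1)) ↔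
        ¬ ((∀ i : PEmpty, _) ∧ (∀ j, (leLF 0 (yR j)).2))
      constructor
      · rintro (⟨i, _⟩ | ⟨j, hj⟩)
        · exact i.elim
        · intro h; exact ((IHR j).1.1 (h.2 j)) hj
      · intro h
        right
        by_contra hc
        push_neg at hc
        exact h ⟨fun i => i.elim, fun j => (IHR j).1.2 (hc j)⟩

theorem zero_le_lf {xl xr : Type u} {xL : xl → PGame.{u}} {xR : xr → PGame.{u}} :
    0 ≤ mk xl xr xL xR ↔ ∀ j, 0 ⧏ xR j := by
  show ((∀ i : PEmpty, _) ∧ (∀ j, (leLF 0 (xR j)).2)) ↔ _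
  constructor
  · intro h j; exact (leLF_zero_aux (xR j)).1.1 (h.2 j)
  · intro h; exact ⟨fun i => i.elim, fun j => (leLF_zero_aux (xR j)).1.2 (h j)⟩

theorem zero_lf_le {xl xr : Type u} {xL : xl → PGame.{u}} {xR : xr → PGame.{u}} :
    0 ⧏ mk xl xr xL xR ↔ ∃ i, 0 ≤ xL i := by
  show ¬ ((∀ i, (leLF (xL i) 0).2) ∧ (∀ j : PEmpty, _)) ↔ _
  constructor
  · intro h
    by_contra hc
    push_neg at hc
    exact h ⟨fun i => (leLF_zero_aux (xL i)).2.2 (hc i), fun j => j.elim⟩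
  · rintro ⟨i, hi⟩ h
    exact ((leLF_zero_aux (xL i)).2.1 (h.1 i)) hi

theorem lt_of_le_of_lf {x y : PGame} (h1 : x ≤ y) (h2 : x ⧏ y) : x < y := ⟨h1, h2⟩

end SetTheory.PGame

namespace MixedDeletion

/-- The degree of a vertex `v` with respect to an edge set `E`. -/
def deg (E : Finset (Sym2 ℕ)) (v : ℕ) : ℕ := (E.filter (fun e => v ∈ e)).card

/-- The graph position with vertex set `V` and edge set `E` has no isolated vertex. -/
def NoIsol (V : Finset ℕ) (E : Finset (Sym2 ℕ)) : Prop := ∀ v ∈ V, 0 < deg E v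

/-- Result of Left deleting the vertex `v`: remove `v` and all incident edges. -/
def delV (V : Finset ℕ) (E : Finset (Sym2 ℕ)) (v : ℕ) : Finset ℕ × Finset (Sym2 ℕ) :=
  (V.erase v, E.filter (fun e => v ∉ e))

/-- Left may legally delete vertex `v` under the base (Classic) rules:
`v` is a vertex and the deletion creates no isolated vertex. -/
def LeftOK (V : Finset ℕ) (E : Finset (Sym2 ℕ)) (v : ℕ) : Prop :=
  v ∈ V ∧ NoIsol (V.erase v) (E.filter (fun e => v ∉ e))

/-- Right may legally delete edge `e` under the base (Classic) rules:
`e` is an edge and the deletion creates no isolated vertex. -/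
def RightOK (V : Finset ℕ) (E : Finset (Sym2 ℕ)) (e : Sym2 ℕ) : Prop :=
  e ∈ E ∧ NoIsol V (E.erase e)

/-- The Classic Variant of the Mixed Deletion Game, as a partizan game:
Left deletes a vertex (and incident edges), Right deletes an edge,
and no move may create an isolated vertex. -/
def classicG : Finset ℕ → Finset (Sym2 ℕ) → PGame
  | V, E =>
    PGame.mk {v : ℕ // LeftOK V E v} {e : Sym2 ℕ // RightOK V E e}
      (fun x => classicG (V.erase x.val) (E.filter (fun e => x.val ∉ e)))
      (fun x => classicG V (E.erase x.val))
  termination_by V E => V.card + E.card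
  decreasing_by
  · have h1 : (V.erase x.val).card < V.card := Finset.card_erase_lt_of_mem x.2.1
    have h2 : (E.filter (fun e => x.val ∉ e)).card ≤ E.card := Finset.card_filter_le _ _
    omega
  · have h1 : (E.erase x.val).card < E.card := Finset.card_erase_lt_of_mem x.2.1
    omega

/-- The Forbidden Leaf Variant: as the Classic Variant, but Left may not
delete leaf vertices (vertices of degree one). -/
def flG : Finset ℕ → Finset (Sym2 ℕ) → PGame
  | V, E =>
    PGame.mk {v : ℕ // LeftOK V E v ∧ deg E v ≠ 1} {e : Sym2 ℕ // RightOK V E e}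
      (fun x => flG (V.erase x.val) (E.filter (fun e => x.val ∉ e)))
      (fun x => flG V (E.erase x.val))
  termination_by V E => V.card + E.card
  decreasing_by
  · have h1 : (V.erase x.val).card < V.card := Finset.card_erase_lt_of_mem x.2.1.1
    have h2 : (E.filter (fun e => x.val ∉ e)).card ≤ E.card := Finset.card_filter_le _ _
    omega
  · have h1 : (E.erase x.val).card < E.card := Finset.card_erase_lt_of_mem x.2.1
    omega

/-- The Mutual Failures Variant: as the Classic Variant, but in any graph
position a player has a legal move if and only if the opponent does; i.e. a
base-rules move is legal only if the opponent also has a base-rules move. -/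
def mfG : Finset ℕ → Finset (Sym2 ℕ) → PGame
  | V, E =>
    PGame.mk {v : ℕ // LeftOK V E v ∧ ∃ e, RightOK V E e}
      {e : Sym2 ℕ // RightOK V E e ∧ ∃ v, LeftOK V E v}
      (fun x => mfG (V.erase x.val) (E.filter (fun e => x.val ∉ e)))
      (fun x => mfG V (E.erase x.val))
  termination_by V E => V.card + E.card
  decreasing_by
  · have h1 : (V.erase x.val).card < V.card := Finset.card_erase_lt_of_mem x.2.1.1
    have h2 : (E.filter (fun e => x.val ∉ e)).card ≤ E.card := Finset.card_filter_le _ _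
    omega
  · have h1 : (E.erase x.val).card < E.card := Finset.card_erase_lt_of_mem x.2.1.1
    omega

/-- Edge set of the path graph on vertices `0, 1, …, n-1`. -/
def pathE (n : ℕ) : Finset (Sym2 ℕ) := (Finset.range (n - 1)).image (fun i => s(i, i + 1))

/-- Edge set of the cycle graph on vertices `0, 1, …, n-1`. -/
def cycleE (n : ℕ) : Finset (Sym2 ℕ) := (Finset.range n).image (fun i => s(i, (i + 1) % n))

/-- Edge set of the complete graph on vertices `0, 1, …, n-1`. -/
def completeE (n : ℕ) : Finset (Sym2 ℕ) := (Finset.range n).sym2.filter (fun e => ¬ e.IsDiag)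

/-- The path position `P_n` in the Classic Variant. -/
def classicPath (n : ℕ) : PGame := classicG (Finset.range n) (pathE n)

/-- The cycle position `C_n` in the Classic Variant. -/
def classicCycle (n : ℕ) : PGame := classicG (Finset.range n) (cycleE n)

/-- The complete graph position `K_n` in the Classic Variant. -/
def classicComplete (n : ℕ) : PGame := classicG (Finset.range n) (completeE n)

/-- The path position `P_n` in the Forbidden Leaf Variant. -/
def flPath (n : ℕ) : PGame := flG (Finset.range n) (pathE n)

/-- The cycle position `C_n` in the Forbidden Leaf Variant. -/
def flCycle (n : ℕ) : PGame := flG (Finset.range n) (cycleE n)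

/-- The complete graph position `K_n` in the Forbidden Leaf Variant. -/
def flComplete (n : ℕ) : PGame := flG (Finset.range n) (completeE n)

/-- The path position `P_n` in the Mutual Failures Variant. -/
def mfPath (n : ℕ) : PGame := mfG (Finset.range n) (pathE n)

/-- The cycle position `C_n` in the Mutual Failures Variant. -/
def mfCycle (n : ℕ) : PGame := mfG (Finset.range n) (cycleE n)

/-- The complete graph position `K_n` in the Mutual Failures Variant. -/
def mfComplete (n : ℕ) : PGame := mfG (Finset.range n) (completeE n)

/-- The partizan game equal to a natural number `n`. -/
def natPG : ℕ → PGame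
  | 0 => 0
  | n + 1 => natPG n + 1

/-- The partizan game equal to an integer `z`. -/
def intPG (z : ℤ) : PGame := if 0 ≤ z then natPG z.toNat else -natPG (-z).toNat

/-- The game up, `↑ = {0 | *}`. -/
def up : PGame := PGame.mk PUnit PUnit (fun _ => 0) (fun _ => star)

/-- The game down, `↓ = {* | 0}`. -/
def down : PGame := -up

/-- The sum of `n` copies of up. -/
def natUp : ℕ → PGame
  | 0 => 0
  | n + 1 => natUp n + up

/-- The game `z·↑`: `|z|` copies of up if `z ≥ 0`, and `|z|` copies of down otherwise. -/
def zUp (z : ℤ) : PGame := if 0 ≤ z then natUp z.toNat else -natUp (-z).toNat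

/-- Two games have the same outcome: Left wins moving first in one iff in the other,
and Right wins moving first in one iff in the other. -/
def SameOutcome (A B : PGame) : Prop := (0 ⧏ A ↔ 0 ⧏ B) ∧ (A ⧏ 0 ↔ B ⧏ 0)

/-- Far-star equivalence: `G + X + ✶` and `H + X + ✶` have the same outcome for
every game `X`, where `✶` (far star) is any nim-heap `*k` with `k ≥ 2`. -/
def FarStarEquiv (G H : PGame) : Prop :=
  ∀ (X : PGame) (k : ℕ), 2 ≤ k → SameOutcome (G + X + nim k) (H + X + nim k)

/-- `G` has atomic weight `z` if `G` is far-star equivalent to `z·↑`. -/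
def AtomicWeight (G : PGame) (z : ℤ) : Prop := FarStarEquiv G (zUp z)

/-- A game is all-small if in every subposition Left has a move iff Right has a move. -/
def AllSmall : PGame → Prop
  | PGame.mk l r L R =>
    (Nonempty l ↔ Nonempty r) ∧ (∀ i, AllSmall (L i)) ∧ (∀ j, AllSmall (R j))

/-! ### Path edge lists -/

def cedges : List ℕ → List (Sym2 ℕ)
  | a :: b :: t => s(a, b) :: cedges (b :: t)
  | _ => []

@[simp] lemma cedges_nil : cedges [] = [] := rfl
@[simp] lemma cedges_single (a : ℕ) : cedges [a] = [] := rfl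
@[simp] lemma cedges_cons (a b : ℕ) (t : List ℕ) :
    cedges (a :: b :: t) = s(a, b) :: cedges (b :: t) := rfl

lemma mem_cedges_sub {c : List ℕ} {e : Sym2 ℕ} (he : e ∈ cedges c) : ∀ v ∈ e, v ∈ c := by
  induction c with
  | nil => simp at he
  | cons a t ih =>
    cases t with
    | nil => simp at he
    | cons b t' =>
      rw [cedges_cons, List.mem_cons] at he
      rcases he with rfl | he
      · intro v hv
        rw [Sym2.mem_iff] at hv
        rcases hv with rfl | rfl <;> simp
      · intro v hv
        exact List.mem_cons_of_mem _ (ih he v hv)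

lemma cedges_append (l1 : List ℕ) (a b : ℕ) (l2 : List ℕ) :
    cedges (l1 ++ a :: b :: l2) = cedges (l1 ++ [a]) ++ s(a, b) :: cedges (b :: l2) := by
  induction l1 with
  | nil => simp
  | cons x l1 ih =>
    cases l1 with
    | nil => simp
    | cons y l1' =>
      simp only [List.cons_append, cedges_cons] at ih ⊢
      rw [ih]

lemma mem_cedges_decomp {c : List ℕ} {e : Sym2 ℕ} (he : e ∈ cedges c) :
    ∃ l1 a b l2, c = l1 ++ a :: b :: l2 ∧ e = s(a, b) := by
  induction c with
  | nil => simp at he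
  | cons a t ih =>
    cases t with
    | nil => simp at he
    | cons b t' =>
      rw [cedges_cons, List.mem_cons] at he
      rcases he with rfl | he
      · exact ⟨[], a, b, t', rfl, rfl⟩
      · obtain ⟨l1, x, y, l2, hbt, hel⟩ := ih he
        exact ⟨a :: l1, x, y, l2, by rw [List.cons_append, ← hbt], hel⟩


/-! ### Linear forest certificates -/

def Vv (L : List (List ℕ)) : Finset ℕ := L.flatten.toFinset
def Ee (L : List (List ℕ)) : Finset (Sym2 ℕ) := (L.map cedges).flatten.toFinset
def Good (L : List (List ℕ)) : Prop := L.flatten.Nodup ∧ ∀ c ∈ L, 2 ≤ c.length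

lemma mem_Vv {L : List (List ℕ)} {v : ℕ} : v ∈ Vv L ↔ ∃ c ∈ L, v ∈ c := by
  simp [Vv]

lemma mem_Ee {L : List (List ℕ)} {e : Sym2 ℕ} : e ∈ Ee L ↔ ∃ c ∈ L, e ∈ cedges c := by
  simp [Ee]

lemma comp_nodup {L : List (List ℕ)} (hg : Good L) {c : List ℕ} (hc : c ∈ L) : c.Nodup :=
  (List.nodup_flatten.1 hg.1).1 c hc

lemma comp_eq {L : List (List ℕ)} (hg : Good L) {c d : List ℕ} (hc : c ∈ L) (hd : d ∈ L)
    {v : ℕ} (hvc : v ∈ c) (hvd : v ∈ d) : c = d := by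
  by_contra hne
  have hp : List.Pairwise List.Disjoint L := (List.nodup_flatten.1 hg.1).2
  haveI : Std.Symm (@List.Disjoint ℕ) := ⟨fun a b h => h.symm⟩
  exact (hp.forall hc hd hne) hvc hvd

lemma perm_flatten {L M : List (List ℕ)} {c : List ℕ} (hp : L.Perm (c :: M)) :
    List.Perm L.flatten (c ++ M.flatten) := by
  simpa using hp.flatten

lemma erase_disj {L M : List (List ℕ)} (hg : Good L) {c : List ℕ} (hp : L.Perm (c :: M))
    {v : ℕ} (hvc : v ∈ c) (hvd : v ∈ M.flatten) : False := by
  have : (c ++ M.flatten).Nodup := (perm_flatten hp).nodup hg.1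
  exact (List.disjoint_of_nodup_append this) hvc hvd

lemma exists_edge {c : List ℕ} {v : ℕ} (h2 : 2 ≤ c.length) (hv : v ∈ c) :
    ∃ e ∈ cedges c, v ∈ e := by
  induction c with
  | nil => simp at hv
  | cons a t ih =>
    cases t with
    | nil => simp at h2
    | cons b t' =>
      rw [List.mem_cons] at hv
      rcases hv with rfl | hv
      · exact ⟨s(v, b), by simp, by simp⟩
      · cases t' with
        | nil =>
          rw [List.mem_singleton] at hv
          subst hv
          exact ⟨s(a, v), by simp, by simp⟩
        | cons x t'' =>
          obtain ⟨e, he, hve⟩ := ih (by simp) hv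
          exact ⟨e, by rw [cedges_cons]; exact List.mem_cons_of_mem _ he, hve⟩

lemma noIsol_of_good {L : List (List ℕ)} (hg : Good L) : NoIsol (Vv L) (Ee L) := by
  intro v hv
  obtain ⟨c, hc, hvc⟩ := mem_Vv.1 hv
  obtain ⟨e, he, hve⟩ := exists_edge (hg.2 c hc) hvc
  exact Finset.card_pos.2 ⟨e, Finset.mem_filter.2 ⟨mem_Ee.2 ⟨c, hc, he⟩, hve⟩⟩

lemma head_edge_unique {L : List (List ℕ)} (hg : Good L) {a b : ℕ} {t : List ℕ}
    (hc : (a :: b :: t) ∈ L) {e : Sym2 ℕ} (he : e ∈ Ee L) (hae : a ∈ e) : e = s(a, b) := by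
  obtain ⟨d, hd, hed⟩ := mem_Ee.1 he
  have had : a ∈ d := mem_cedges_sub hed a hae
  have hdc : d = a :: b :: t := comp_eq hg hd hc had (by simp)
  subst hdc
  rw [cedges_cons, List.mem_cons] at hed
  rcases hed with rfl | hed
  · rfl
  · exact absurd (mem_cedges_sub hed a hae)
      ((List.nodup_cons.1 (comp_nodup hg hc)).1)

lemma last_edge_unique {L : List (List ℕ)} (hg : Good L) {x y : ℕ} {l : List ℕ}
    (hc : (l ++ [x, y]) ∈ L) {e : Sym2 ℕ} (he : e ∈ Ee L) (hye : y ∈ e) : e = s(x, y) := by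
  obtain ⟨d, hd, hed⟩ := mem_Ee.1 he
  have hyd : y ∈ d := mem_cedges_sub hed y hye
  have hdc : d = l ++ [x, y] := comp_eq hg hd hc hyd (by simp)
  subst hdc
  have : cedges (l ++ [x, y]) = cedges (l ++ [x]) ++ [s(x, y)] := by
    have := cedges_append l x y []
    simpa using this
  rw [this, List.mem_append, List.mem_singleton] at hed
  rcases hed with hed | rfl
  · exfalso
    have hyl : y ∈ l ++ [x] := mem_cedges_sub hed y hye
    have hn : ((l ++ [x]) ++ [y]).Nodup := by
      simpa [List.append_assoc] using comp_nodup hg hc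
    exact (List.disjoint_of_nodup_append hn) hyl (by simp)
  · rfl


/-! ### Small nodup helpers -/

lemma nodup_mid₁ {l1 l2 : List ℕ} {a b : ℕ} (h : (l1 ++ a :: b :: l2).Nodup) :
    b ∉ l1 ++ [a] := by
  intro hb
  have hn2 : (a :: b :: l2).Nodup := (List.sublist_append_right l1 _).nodup h
  rcases List.mem_append.1 hb with h1 | h1
  · exact (List.disjoint_of_nodup_append h) h1 (by simp)
  · rw [List.mem_singleton] at h1
    subst h1
    exact (List.nodup_cons.1 hn2).1 (by simp)

lemma nodup_mid₂ {l1 l2 : List ℕ} {a b : ℕ} (h : (l1 ++ a :: b :: l2).Nodup) :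
    a ∉ b :: l2 :=
  (List.nodup_cons.1 ((List.sublist_append_right l1 _).nodup h)).1

lemma no_isol_contra {L : List (List ℕ)} {E' : Finset (Sym2 ℕ)} {v : ℕ}
    (hv : v ∈ Vv L) (huniq : ∀ e' ∈ E', v ∉ e') (hni : NoIsol (Vv L) E') : False := by
  have h := hni v hv
  rw [deg, Finset.card_pos] at h
  obtain ⟨e', he'⟩ := h
  rw [Finset.mem_filter] at he'
  exact huniq e' he'.1 he'.2

/-! ### The Right move lemma -/

lemma right_move {L : List (List ℕ)} (hg : Good L) {e : Sym2 ℕ}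
    (hro : RightOK (Vv L) (Ee L) e) :
    ∃ (c p q : List ℕ) (M : List (List ℕ)), L.Perm (c :: M) ∧ c ∈ L ∧
      2 ≤ p.length ∧ 2 ≤ q.length ∧ p.length + q.length = c.length ∧
      Good (p :: q :: M) ∧ Vv (p :: q :: M) = Vv L ∧
      Ee (p :: q :: M) = (Ee L).erase e := by
  obtain ⟨he, hni⟩ := hro
  obtain ⟨c, hc, hec⟩ := mem_Ee.1 he
  obtain ⟨l1, a, b, l2, hcd, hes⟩ := mem_cedges_decomp hec
  subst hes
  subst hcd
  have hcn : (l1 ++ a :: b :: l2).Nodup := comp_nodup hg hc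
  have hl1 : l1 ≠ [] := by
    rintro rfl
    rw [List.nil_append] at hc
    refine no_isol_contra (v := a) (mem_Vv.2 ⟨_, hc, by simp⟩) ?_ hni
    intro e' he' hae'
    exact (Finset.ne_of_mem_erase he')
      (head_edge_unique hg hc (Finset.mem_of_mem_erase he') hae')
  have hl2 : l2 ≠ [] := by
    rintro rfl
    refine no_isol_contra (v := b) (mem_Vv.2 ⟨_, hc, by simp⟩) ?_ hni
    intro e' he' hbe'
    have : e' = s(a, b) := last_edge_unique hg hc (Finset.mem_of_mem_erase he') hbe'
    exact (Finset.ne_of_mem_erase he') this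
  obtain ⟨M, hpM⟩ : ∃ M, L.Perm ((l1 ++ a :: b :: l2) :: M) :=
    ⟨_, List.perm_cons_erase hc⟩
  refine ⟨l1 ++ a :: b :: l2, l1 ++ [a], b :: l2, M, hpM, hc, ?_, ?_, ?_, ?_, ?_, ?_⟩
  · have := List.length_pos_iff.2 hl1
    simp only [List.length_append, List.length_singleton]
    omega
  · have := List.length_pos_iff.2 hl2
    simp only [List.length_cons]
    omega
  · simp; omega
  · -- Good
    constructor
    · have hnd : ((l1 ++ a :: b :: l2) ++ M.flatten).Nodup := (perm_flatten hpM).nodup hg.1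
      have hflat : ((l1 ++ [a]) :: (b :: l2) :: M).flatten
          = (l1 ++ a :: b :: l2) ++ M.flatten := by
        simp [List.append_assoc]
      rw [hflat]
      exact hnd
    · intro d hd
      rcases List.mem_cons.1 hd with rfl | hd
      · have := List.length_pos_iff.2 hl1
        simp only [List.length_append, List.length_singleton]
        omega
      rcases List.mem_cons.1 hd with rfl | hd
      · have := List.length_pos_iff.2 hl2
        simp only [List.length_cons]
        omega
      · exact hg.2 d (hpM.mem_iff.2 (List.mem_cons_of_mem _ hd))
  · -- Vv
    have hflat : ((l1 ++ [a]) :: (b :: l2) :: M).flatten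
        = (l1 ++ a :: b :: l2) ++ M.flatten := by simp [List.append_assoc]
    rw [Vv, Vv, hflat]
    exact List.toFinset_eq_of_perm _ _ (perm_flatten hpM).symm
  · -- Ee
    ext e'
    simp only [mem_Ee, Finset.mem_erase, List.mem_cons]
    have hce : cedges (l1 ++ a :: b :: l2)
        = cedges (l1 ++ [a]) ++ s(a, b) :: cedges (b :: l2) := cedges_append l1 a b l2
    constructor
    · rintro ⟨d, (rfl | rfl | hdM), hed⟩
      · refine ⟨?_, _, hc, by rw [hce]; exact List.mem_append_left _ hed⟩
        rintro rfl
        exact (nodup_mid₁ hcn) (mem_cedges_sub hed b (by simp))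
      · refine ⟨?_, _, hc,
          by rw [hce]; exact List.mem_append_right _ (List.mem_cons_of_mem _ hed)⟩
        rintro rfl
        exact (nodup_mid₂ hcn) (mem_cedges_sub hed a (by simp))
      · refine ⟨fun h => ?_, d, hpM.mem_iff.2 (List.mem_cons_of_mem _ hdM), hed⟩
        subst h
        exact erase_disj hg hpM (by simp)
          (List.mem_flatten.2 ⟨d, hdM, mem_cedges_sub hed a (by simp)⟩)
    · rintro ⟨hne, d, hdL, hed⟩
      by_cases hdc : d = l1 ++ a :: b :: l2
      · subst hdc
        rw [hce, List.mem_append, List.mem_cons] at hed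
        rcases hed with h1 | h1 | h1
        · exact ⟨_, Or.inl rfl, h1⟩
        · exact absurd h1 hne
        · exact ⟨_, Or.inr (Or.inl rfl), h1⟩
      · have hdM : d ∈ M := by
          rcases List.mem_cons.1 (hpM.mem_iff.1 hdL) with h | h
          · exact absurd h hdc
          · exact h
        exact ⟨d, Or.inr (Or.inr hdM), hed⟩


/-! ### Left move lemmas -/

lemma leaf_move {L M : List (List ℕ)} (hg : Good L) {a b : ℕ} {t : List ℕ}
    (hp : L.Perm ((a :: b :: t) :: M)) (ht : t ≠ []) :
    LeftOK (Vv L) (Ee L) a ∧ Good ((b :: t) :: M) ∧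
      Vv ((b :: t) :: M) = (Vv L).erase a ∧
      Ee ((b :: t) :: M) = (Ee L).filter (fun e => a ∉ e) := by
  have hc : (a :: b :: t) ∈ L := hp.mem_iff.2 (by simp)
  have hcn : (a :: b :: t).Nodup := comp_nodup hg hc
  have hfl : List.Perm L.flatten (a :: ((b :: t) :: M).flatten) := by
    simpa using perm_flatten hp
  have hnodup : (a :: ((b :: t) :: M).flatten).Nodup := hfl.nodup hg.1
  have hanotin : a ∉ ((b :: t) :: M).flatten := (List.nodup_cons.1 hnodup).1
  have hgood : Good ((b :: t) :: M) := by
    constructor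
    · exact (List.nodup_cons.1 hnodup).2
    · intro d hd
      rcases List.mem_cons.1 hd with rfl | hd
      · have := List.length_pos_iff.2 ht
        simp only [List.length_cons]
        omega
      · exact hg.2 d (hp.mem_iff.2 (List.mem_cons_of_mem _ hd))
  have hVv : Vv ((b :: t) :: M) = (Vv L).erase a := by
    have h1 : Vv L = insert a (Vv ((b :: t) :: M)) := by
      rw [Vv, Vv, List.toFinset_eq_of_perm _ _ hfl]
      simp
    rw [h1, Finset.erase_insert (by simpa [Vv] using hanotin)]
  have hEe : Ee ((b :: t) :: M) = (Ee L).filter (fun e => a ∉ e) := by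
    ext e'
    simp only [mem_Ee, Finset.mem_filter, List.mem_cons]
    constructor
    · rintro ⟨d, (rfl | hdM), hed⟩
      · refine ⟨⟨_, hc, by rw [cedges_cons]; exact List.mem_cons_of_mem _ hed⟩, fun hae => ?_⟩
        exact (List.nodup_cons.1 hcn).1 (mem_cedges_sub hed a hae)
      · refine ⟨⟨d, hp.mem_iff.2 (List.mem_cons_of_mem _ hdM), hed⟩, fun hae => ?_⟩
        exact erase_disj hg hp (by simp)
          (List.mem_flatten.2 ⟨d, hdM, mem_cedges_sub hed a hae⟩)
    · rintro ⟨⟨d, hdL, hed⟩, hae⟩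
      by_cases hdc : d = a :: b :: t
      · subst hdc
        rw [cedges_cons, List.mem_cons] at hed
        rcases hed with rfl | hed
        · exact absurd (by simp : a ∈ s(a, b)) hae
        · exact ⟨_, Or.inl rfl, hed⟩
      · have hdM : d ∈ M := by
          rcases List.mem_cons.1 (hp.mem_iff.1 hdL) with h | h
          · exact absurd h hdc
          · exact h
        exact ⟨d, Or.inr hdM, hed⟩
  refine ⟨⟨mem_Vv.2 ⟨_, hc, by simp⟩, ?_⟩, hgood, hVv, hEe⟩
  rw [← hVv, ← hEe]
  exact noIsol_of_good hgood

lemma split_move {L M : List (List ℕ)} (hg : Good L) {v1 v2 v3 v4 v5 : ℕ}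
    (hp : L.Perm ([v1, v2, v3, v4, v5] :: M)) :
    LeftOK (Vv L) (Ee L) v3 ∧ Good ([v1, v2] :: [v4, v5] :: M) ∧
      Vv ([v1, v2] :: [v4, v5] :: M) = (Vv L).erase v3 ∧
      Ee ([v1, v2] :: [v4, v5] :: M) = (Ee L).filter (fun e => v3 ∉ e) := by
  have hc : [v1, v2, v3, v4, v5] ∈ L := hp.mem_iff.2 (by simp)
  have hcn : ([v1, v2, v3, v4, v5] : List ℕ).Nodup := comp_nodup hg hc
  have hfl : List.Perm L.flatten (v3 :: ([v1, v2] :: [v4, v5] :: M).flatten) := by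
    refine (perm_flatten hp).trans ?_
    simpa using (List.perm_middle (a := v3) (l₁ := [v1, v2]) (l₂ := v4 :: v5 :: M.flatten))
  have hnodup : (v3 :: ([v1, v2] :: [v4, v5] :: M).flatten).Nodup := hfl.nodup hg.1
  have hanotin : v3 ∉ ([v1, v2] :: [v4, v5] :: M).flatten := (List.nodup_cons.1 hnodup).1
  have hne : v3 ≠ v1 ∧ v3 ≠ v2 ∧ v3 ≠ v4 ∧ v3 ≠ v5 := by
    simp only [List.flatten, List.mem_append, List.mem_cons] at hanotin
    simp at hanotin
    tauto
  have hgood : Good ([v1, v2] :: [v4, v5] :: M) := by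
    constructor
    · exact (List.nodup_cons.1 hnodup).2
    · intro d hd
      rcases List.mem_cons.1 hd with rfl | hd
      · simp
      rcases List.mem_cons.1 hd with rfl | hd
      · simp
      · exact hg.2 d (hp.mem_iff.2 (List.mem_cons_of_mem _ hd))
  have hVv : Vv ([v1, v2] :: [v4, v5] :: M) = (Vv L).erase v3 := by
    have h1 : Vv L = insert v3 (Vv ([v1, v2] :: [v4, v5] :: M)) := by
      rw [Vv, Vv, List.toFinset_eq_of_perm _ _ hfl]
      simp
    rw [h1, Finset.erase_insert (by simpa [Vv] using hanotin)]
  have hcedges : cedges [v1, v2, v3, v4, v5]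
      = [s(v1, v2), s(v2, v3), s(v3, v4), s(v4, v5)] := rfl
  have hEe : Ee ([v1, v2] :: [v4, v5] :: M)
      = (Ee L).filter (fun e => v3 ∉ e) := by
    ext e'
    simp only [mem_Ee, Finset.mem_filter, List.mem_cons]
    constructor
    · rintro ⟨d, (rfl | rfl | hdM), hed⟩
      · have : e' = s(v1, v2) := by simpa using hed
        subst this
        refine ⟨⟨_, hc, by rw [hcedges]; simp⟩, ?_⟩
        rw [Sym2.mem_iff]
        push_neg
        exact ⟨hne.1, hne.2.1⟩
      · have : e' = s(v4, v5) := by simpa using hed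
        subst this
        refine ⟨⟨_, hc, by rw [hcedges]; simp⟩, ?_⟩
        rw [Sym2.mem_iff]
        push_neg
        exact ⟨hne.2.2.1, hne.2.2.2⟩
      · refine ⟨⟨d, hp.mem_iff.2 (List.mem_cons_of_mem _ hdM), hed⟩, fun hae => ?_⟩
        exact erase_disj hg hp (by simp)
          (List.mem_flatten.2 ⟨d, hdM, mem_cedges_sub hed v3 hae⟩)
    · rintro ⟨⟨d, hdL, hed⟩, hae⟩
      by_cases hdc : d = [v1, v2, v3, v4, v5]
      · subst hdc
        rw [hcedges] at hed
        simp only [List.mem_cons, List.not_mem_nil, or_false] at hed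
        rcases hed with rfl | rfl | rfl | rfl
        · exact ⟨[v1, v2], Or.inl rfl, by simp⟩
        · exact absurd (by simp : v3 ∈ s(v2, v3)) hae
        · exact absurd (by simp : v3 ∈ s(v3, v4)) hae
        · exact ⟨[v4, v5], Or.inr (Or.inl rfl), by simp⟩
      · have hdM : d ∈ M := by
          rcases List.mem_cons.1 (hp.mem_iff.1 hdL) with h | h
          · exact absurd h hdc
          · exact h
        exact ⟨d, Or.inr (Or.inr hdM), hed⟩
  refine ⟨⟨mem_Vv.2 ⟨_, hc, by simp⟩, ?_⟩, hgood, hVv, hEe⟩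
  rw [← hVv, ← hEe]
  exact noIsol_of_good hgood

/-! ### Outcome bookkeeping -/

def RFform (L : List (List ℕ)) : Prop :=
  (∀ c ∈ L, c.length = 2 ∨ c.length = 4) ∧ (L.map List.length).count 4 = 1

lemma exists_max (L : List (List ℕ)) (h : L ≠ []) :
    ∃ c ∈ L, ∀ d ∈ L, d.length ≤ c.length := by
  induction L with
  | nil => simp at h
  | cons x t ih =>
    cases t with
    | nil => exact ⟨x, by simp, by simp⟩
    | cons y t' =>
      obtain ⟨c, hc, hmax⟩ := ih (by simp)
      by_cases hcx : c.length ≤ x.length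
      · refine ⟨x, by simp, ?_⟩
        rintro d hd
        rcases List.mem_cons.1 hd with rfl | hd
        · exact le_refl _
        · exact (hmax d hd).trans hcx
      · refine ⟨c, List.mem_cons_of_mem _ hc, ?_⟩
        rintro d hd
        rcases List.mem_cons.1 hd with rfl | hd
        · omega
        · exact hmax d hd

/-! ### The key induction -/

theorem key (N : ℕ) : ∀ (L : List (List ℕ)), Good L → (Vv L).card + (Ee L).card ≤ N →
    (¬ RFform L → 0 ≤ classicG (Vv L) (Ee L)) ∧
    ((∃ c ∈ L, 3 ≤ c.length) → 0 ⧏ classicG (Vv L) (Ee L)) := by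
  induction N with
  | zero =>
    intro L hg hcard
    constructor
    · intro _
      rw [classicG, PGame.zero_le_lf]
      rintro ⟨e, he, _⟩
      exfalso
      have h0 : 0 < (Ee L).card := Finset.card_pos.2 ⟨e, he⟩
      omega
    · rintro ⟨c, hc, h3⟩
      exfalso
      rcases c with _ | ⟨v, t⟩
      · simp at h3
      have h0 : 0 < (Vv L).card := Finset.card_pos.2 ⟨v, mem_Vv.2 ⟨_, hc, by simp⟩⟩
      omega
  | succ N ih =>
    intro L hg hcard
    constructor
    · -- Left wins moving second when L is not of shape (2,…,2,4)
      intro hnf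
      rw [classicG, PGame.zero_le_lf]
      rintro ⟨e, hro⟩
      show 0 ⧏ classicG (Vv L) ((Ee L).erase e)
      obtain ⟨c, p, q, M, hpM, hcL, hp2, hq2, hpq, hg', hV, hE⟩ := right_move hg hro
      rw [← hV, ← hE]
      have hcard' : (Vv (p :: q :: M)).card + (Ee (p :: q :: M)).card ≤ N := by
        rw [hV, hE, Finset.card_erase_of_mem hro.1]
        have h0 : 0 < (Ee L).card := Finset.card_pos.2 ⟨e, hro.1⟩
        omega
      refine (ih _ hg' hcard').2 ?_
      by_contra hbig
      push_neg at hbig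
      have hall2 : ∀ d ∈ (p :: q :: M), d.length = 2 := by
        intro d hd
        have h1 := hg'.2 d hd
        have h2 := hbig d hd
        omega
      have hp2' := hall2 p (by simp)
      have hq2' := hall2 q (by simp)
      refine hnf ⟨?_, ?_⟩
      · intro d hd
        rcases List.mem_cons.1 (hpM.mem_iff.1 hd) with rfl | hdM
        · right; omega
        · left; exact hall2 d (by simp [hdM])
      · have hperm : List.Perm (L.map List.length) (c.length :: M.map List.length) := by
          simpa using hpM.map List.length
        rw [hperm.count_eq]
        have hM0 : (M.map List.length).count 4 = 0 := by
          rw [List.count_eq_zero]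
          intro h4
          obtain ⟨d, hdM, hd4⟩ := List.mem_map.1 h4
          have := hall2 d (by simp [hdM])
          omega
        rw [List.count_cons]
        have hc4 : c.length = 4 := by omega
        simp [hc4, hM0]
    · -- Left wins moving first when some component has length ≥ 3
      rintro ⟨c0, hc0, h30⟩
      have hLne : L ≠ [] := by rintro rfl; simp at hc0
      obtain ⟨c, hcL, hmax⟩ := exists_max L hLne
      have hc3 : 3 ≤ c.length := le_trans h30 (hmax c0 hc0)
      obtain ⟨M, hpM⟩ : ∃ M, L.Perm (c :: M) := ⟨_, List.perm_cons_erase hcL⟩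
      have hMlen : ∀ d ∈ M, 2 ≤ d.length ∧ d.length ≤ c.length := by
        intro d hd
        exact ⟨hg.2 d (hpM.mem_iff.2 (by simp [hd])), hmax d (hpM.mem_iff.2 (by simp [hd]))⟩
      by_cases hsplit : c.length = 5 ∧ ∀ d ∈ M, d.length = 2
      · -- special case: split the P₅ into two P₂'s
        obtain ⟨v1, v2, v3, v4, v5, hc5⟩ : ∃ v1 v2 v3 v4 v5, c = [v1, v2, v3, v4, v5] := by
          obtain ⟨h5, -⟩ := hsplit
          rcases c with _ | ⟨v1, _ | ⟨v2, _ | ⟨v3, _ | ⟨v4, _ | ⟨v5, rest⟩⟩⟩⟩⟩ <;>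
            simp only [List.length_cons, List.length_nil] at h5 <;> try omega
          have : rest = [] := by
            have : rest.length = 0 := by omega
            exact List.length_eq_zero_iff.1 this
          exact ⟨v1, v2, v3, v4, v5, by rw [this]⟩
        subst hc5
        obtain ⟨hlok, hg', hV, hE⟩ := split_move hg hpM
        rw [classicG, PGame.zero_lf_le]
        refine ⟨⟨v3, hlok⟩, ?_⟩
        show 0 ≤ classicG ((Vv L).erase v3) ((Ee L).filter (fun e => v3 ∉ e))
        rw [← hV, ← hE]
        refine (ih _ hg' ?_).1 ?_
        · rw [hV]
          have h1 : (Ee ([v1, v2] :: [v4, v5] :: M)).card ≤ (Ee L).card := by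
            rw [hE]; exact Finset.card_filter_le _ _
          have h2 : 0 < (Vv L).card := Finset.card_pos.2 ⟨v3, hlok.1⟩
          rw [Finset.card_erase_of_mem hlok.1]
          omega
        · rintro ⟨hall, hcount⟩
          have hall2 : ∀ d ∈ ([v1, v2] :: [v4, v5] :: M), d.length = 2 := by
            intro d hd
            rcases List.mem_cons.1 hd with rfl | hd
            · simp
            rcases List.mem_cons.1 hd with rfl | hd
            · simp
            · exact hsplit.2 d hd
          have : (([v1, v2] :: [v4, v5] :: M).map List.length).count 4 = 0 := by
            rw [List.count_eq_zero]
            intro h4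
            obtain ⟨d, hd, hd4⟩ := List.mem_map.1 h4
            have := hall2 d hd
            omega
          omega
      · -- general case: delete a leaf of a maximum-length component
        obtain ⟨a, b, t, hcabt⟩ : ∃ a b t, c = a :: b :: t := by
          rcases c with _ | ⟨a, _ | ⟨b, t⟩⟩ <;>
            simp only [List.length_cons, List.length_nil] at hc3 <;> try omega
          exact ⟨a, b, t, rfl⟩
        subst hcabt
        have ht : t ≠ [] := by
          rintro rfl
          simp at hc3
        obtain ⟨hlok, hg', hV, hE⟩ := leaf_move hg hpM ht
        rw [classicG, PGame.zero_lf_le]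
        refine ⟨⟨a, hlok⟩, ?_⟩
        show 0 ≤ classicG ((Vv L).erase a) ((Ee L).filter (fun e => a ∉ e))
        rw [← hV, ← hE]
        refine (ih _ hg' ?_).1 ?_
        · rw [hV]
          have h1 : (Ee ((b :: t) :: M)).card ≤ (Ee L).card := by
            rw [hE]; exact Finset.card_filter_le _ _
          have h2 : 0 < (Vv L).card := Finset.card_pos.2 ⟨a, hlok.1⟩
          rw [Finset.card_erase_of_mem hlok.1]
          omega
        · rintro ⟨hall, hcount⟩
          have hbt := hall (b :: t) (by simp)
          simp only [List.length_cons] at hbt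
          -- so c.length = 3 or c.length = 5
          rcases hbt with h2 | h4
          · -- c.length = 3 : no component of length 4 anywhere
            have : 4 ∈ ((b :: t) :: M).map List.length := by
              rw [← List.count_pos_iff]
              omega
            obtain ⟨d, hd, hd4⟩ := List.mem_map.1 this
            rcases List.mem_cons.1 hd with rfl | hdM
            · simp only [List.length_cons] at hd4
              omega
            · obtain ⟨hd1, hd2'⟩ := hMlen d hdM
              simp only [List.length_cons] at hd2'
              omega
          · -- c.length = 5 : some other component is not a P₂, hence is a P₄; two 4's
            push_neg at hsplit
            obtain ⟨d, hdM, hd2⟩ := hsplit (by simp; omega)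
            have hd4 : d.length = 4 := by
              rcases hall d (by simp [hdM]) with h | h
              · exact absurd h hd2
              · exact h
            have h4M : 4 ∈ M.map List.length := List.mem_map.2 ⟨d, hdM, hd4⟩
            have hge1 : 1 ≤ (M.map List.length).count 4 := by
              rw [Nat.one_le_iff_ne_zero]
              intro h0
              exact (List.count_eq_zero.1 h0) h4M
            have : (((b :: t) :: M).map List.length).count 4
                = (M.map List.length).count 4 + 1 := by
              simp only [List.map_cons, List.count_cons, List.length_cons]
              have : t.length + 1 = 4 := h4
              simp [this]
            omega

/-! ### Cycle lemmas -/

lemma cedges_cons_head (x : ℕ) (l : List ℕ) (h : l ≠ []) :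
    cedges (x :: l) = s(x, l.head h) :: cedges l := by
  cases l with
  | nil => exact absurd rfl h
  | cons y t => rfl

lemma cedges_map_range (m : ℕ) (f : ℕ → ℕ) :
    cedges ((List.range m).map f)
      = (List.range (m - 1)).map (fun k => s(f k, f (k + 1))) := by
  induction m generalizing f with
  | zero => simp
  | succ m ih =>
    cases m with
    | zero =>
      rw [show List.range 1 = [0] from rfl]
      simp
    | succ m' =>
      have e1 : List.range (m' + 1 + 1) = 0 :: (List.range (m' + 1)).map Nat.succ :=
        List.range_succ_eq_map
      have e2 : List.range (m' + 1) = 0 :: (List.range m').map Nat.succ :=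
        List.range_succ_eq_map
      have e3 : (List.range (m' + 1)).map (f ∘ Nat.succ)
          = (f ∘ Nat.succ) 0 :: ((List.range m').map Nat.succ).map (f ∘ Nat.succ) := by
        rw [e2, List.map_cons]
      rw [e1, List.map_cons, List.map_map, e3, cedges_cons, ← e3, ih (f ∘ Nat.succ)]
      simp only [Nat.add_sub_cancel]
      rw [e2, List.map_cons, List.map_map]
      rfl

lemma mod_shift_inj {n : ℕ} (hn : 0 < n) {a k1 k2 : ℕ} (h1 : k1 < n) (h2 : k2 < n)
    (h : (a + k1) % n = (a + k2) % n) : k1 = k2 := by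
  rcases le_total k1 k2 with hle | hle
  · have hd : n ∣ (a + k2) - (a + k1) := (Nat.modEq_iff_dvd' (by omega)).1 h
    have h0 := Nat.eq_zero_of_dvd_of_lt hd
    omega
  · have hd : n ∣ (a + k1) - (a + k2) := (Nat.modEq_iff_dvd' (by omega)).1 h.symm
    have h0 := Nat.eq_zero_of_dvd_of_lt hd
    omega

lemma mod_inv {n j v : ℕ} (hn : 0 < n) (hj : j < n) (hv : v < n) :
    (j + 1 + ((v + n - j - 1) % n)) % n = v := by
  rw [Nat.add_mod_mod]
  have h1 : j + 1 + (v + n - j - 1) = v + n := by omega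
  rw [h1, Nat.add_mod_right, Nat.mod_eq_of_lt hv]


lemma cyc_inj {n : ℕ} (hn : 3 ≤ n) {i j : ℕ} (hi : i < n) (hj : j < n)
    (h : s(i, (i + 1) % n) = s(j, (j + 1) % n)) : i = j := by
  rw [Sym2.eq_iff] at h
  rcases h with ⟨h1, -⟩ | ⟨h1, h2⟩
  · exact h1
  · exfalso
    have h3 : i = (i + 2) % n := by
      conv_lhs => rw [h1, ← h2]
      rw [Nat.mod_add_mod]
    have h4 : (i + 2) % n = i % n := by rw [← h3, Nat.mod_eq_of_lt hi]
    have h5 : n ∣ (i + 2) - i := (Nat.modEq_iff_dvd' (by omega)).1 h4.symm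
    have h6 := Nat.le_of_dvd (by omega) h5
    omega

lemma cycle_right {n : ℕ} (hn : 3 ≤ n) {e : Sym2 ℕ} (he : e ∈ cycleE n) :
    ∃ c : List ℕ, c.length = n ∧ Good [c] ∧ Vv [c] = Finset.range n ∧
      Ee [c] = (cycleE n).erase e := by
  obtain ⟨j, hj, hje⟩ : ∃ j, j < n ∧ s(j, (j + 1) % n) = e := by
    simpa [cycleE] using he
  have hn0 : 0 < n := by omega
  refine ⟨(List.range n).map (fun k => (j + 1 + k) % n), by simp, ⟨?_, ?_⟩, ?_, ?_⟩
  · -- nodup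
    simp only [List.flatten, List.append_eq, List.append_nil]
    refine List.Nodup.map_on ?_ List.nodup_range
    intro k1 h1 k2 h2 hk
    rw [List.mem_range] at h1 h2
    exact mod_shift_inj hn0 h1 h2 hk
  · -- lengths
    intro d hd
    rw [List.mem_singleton] at hd
    subst hd
    simp only [List.length_map, List.length_range]
    omega
  · -- vertex set
    ext v
    simp only [Vv, List.flatten, List.append_eq, List.append_nil, List.mem_toFinset, List.mem_map,
      List.mem_range, Finset.mem_range]
    constructor
    · rintro ⟨k, hk, rfl⟩
      exact Nat.mod_lt _ hn0
    · intro hv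
      exact ⟨(v + n - j - 1) % n, Nat.mod_lt _ hn0, mod_inv hn0 hj hv⟩
  · -- edge set
    ext e'
    have hced : cedges ((List.range n).map (fun k => (j + 1 + k) % n))
        = (List.range (n - 1)).map
            (fun k => s((j + 1 + k) % n, ((j + 1 + k) % n + 1) % n)) := by
      rw [cedges_map_range]
      apply List.map_congr_left
      intro k _
      rw [Nat.mod_add_mod]
      congr 2
    simp only [Ee, List.map_cons, List.map_nil, List.flatten, List.append_eq, List.append_nil,
      List.mem_toFinset, hced, List.mem_map, List.mem_range, Finset.mem_erase,
      cycleE, Finset.mem_image]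
    constructor
    · rintro ⟨k, hk, rfl⟩
      have hik : (j + 1 + k) % n < n := Nat.mod_lt _ hn0
      constructor
      · rw [← hje]
        intro hcontra
        have : (j + 1 + k) % n = j := cyc_inj hn hik hj hcontra
        have hjn : (j + 1 + (n - 1)) % n = j := by
          have h1 : j + 1 + (n - 1) = j + n := by omega
          rw [h1, Nat.add_mod_right, Nat.mod_eq_of_lt hj]
        have := mod_shift_inj hn0 (by omega : k < n) (by omega : n - 1 < n)
          (by rw [this, hjn])
        omega
      · exact ⟨(j + 1 + k) % n, by rwa [Finset.mem_range], rfl⟩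
    · rintro ⟨hne, i, hi, rfl⟩
      rw [Finset.mem_range] at hi
      have hij : i ≠ j := by
        rintro rfl
        exact hne hje
      refine ⟨(i + n - j - 1) % n, ?_, ?_⟩
      · have h1 : (i + n - j - 1) % n < n := Nat.mod_lt _ hn0
        have h2 : (i + n - j - 1) % n ≠ n - 1 := by
          intro hcontra
          have h3 := mod_inv hn0 hj hi
          rw [hcontra] at h3
          have h4 : j + 1 + (n - 1) = j + n := by omega
          rw [h4, Nat.add_mod_right, Nat.mod_eq_of_lt hj] at h3
          exact hij h3.symm
        omega
      · rw [mod_inv hn0 hj hi]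

lemma cycle_left {n : ℕ} (hn : 3 ≤ n) :
    ∃ c : List ℕ, c.length = n - 1 ∧ Good [c] ∧
      Vv [c] = (Finset.range n).erase 0 ∧
      Ee [c] = (cycleE n).filter (fun e => 0 ∉ e) ∧
      LeftOK (Finset.range n) (cycleE n) 0 := by
  set c : List ℕ := (List.range (n - 1)).map (fun k => k + 1) with hcdef
  have hgood : Good [c] := by
    constructor
    · simp only [List.flatten, List.append_eq, List.append_nil]
      exact List.Nodup.map (fun a b h => by omega) List.nodup_range
    · intro d hd
      rw [List.mem_singleton] at hd
      subst hd
      simp only [hcdef, List.length_map, List.length_range]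
      omega
  have hV : Vv [c] = (Finset.range n).erase 0 := by
    ext v
    simp only [Vv, hcdef, List.flatten, List.append_eq, List.append_nil, List.mem_toFinset, List.mem_map,
      List.mem_range, Finset.mem_erase, Finset.mem_range]
    constructor
    · rintro ⟨k, hk, rfl⟩
      omega
    · intro hv
      exact ⟨v - 1, by omega, by omega⟩
  have hE : Ee [c] = (cycleE n).filter (fun e => 0 ∉ e) := by
    ext e'
    have hced : cedges ((List.range (n - 1)).map (fun k => k + 1))
        = (List.range (n - 2)).map (fun k => s(k + 1, k + 2)) := by
      rw [cedges_map_range]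
      have h2 : n - 1 - 1 = n - 2 := by omega
      rw [h2]
    simp only [Ee, hcdef, List.map_cons, List.map_nil, List.flatten, List.append_eq, List.append_nil,
      List.mem_toFinset, hced, List.mem_map, List.mem_range, Finset.mem_filter,
      cycleE, Finset.mem_image]
    constructor
    · rintro ⟨k, hk, rfl⟩
      refine ⟨⟨k + 1, by rw [Finset.mem_range]; omega, ?_⟩, ?_⟩
      · congr 1
        rw [Nat.mod_eq_of_lt (by omega)]
      · rw [Sym2.mem_iff]
        push_neg
        omega
    · rintro ⟨⟨i, hi, rfl⟩, h0⟩
      rw [Finset.mem_range] at hi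
      rw [Sym2.mem_iff] at h0
      push_neg at h0
      have hi0 : i ≠ 0 := fun h => h0.1 h.symm
      have hin : i ≠ n - 1 := by
        intro hcontra
        apply h0.2
        rw [hcontra]
        have : n - 1 + 1 = n := by omega
        rw [this, Nat.mod_self]
      refine ⟨i - 1, by omega, ?_⟩
      have h1 : i - 1 + 1 = i := by omega
      have h2 : i - 1 + 2 = i + 1 := by omega
      rw [h1, h2, Nat.mod_eq_of_lt (by omega)]
  refine ⟨c, by simp [hcdef], hgood, hV, hE, ?_, ?_⟩
  · rw [Finset.mem_range]
    omega
  · rw [← hV, ← hE]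
    exact noIsol_of_good hgood

/-- For every `n ≥ 3` with `n ≠ 5`, Left wins the Classic Variant on the cycle
`C_n` regardless of which player moves first. -/
theorem classic_cycle_left_wins : ∀ n : ℕ, 3 ≤ n → n ≠ 5 → 0 < classicCycle n := by
  intro n h3 h5
  have hle : 0 ≤ classicCycle n := by
    rw [classicCycle, classicG, PGame.zero_le_lf]
    rintro ⟨e, he, hni⟩
    show 0 ⧏ classicG (Finset.range n) ((cycleE n).erase e)
    obtain ⟨c, hlen, hg, hV, hE⟩ := cycle_right h3 he
    rw [← hV, ← hE]
    exact (key _ _ hg le_rfl).2 ⟨c, by simp, by omega⟩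
  have hlf : 0 ⧏ classicCycle n := by
    rw [classicCycle, classicG, PGame.zero_lf_le]
    obtain ⟨c, hlen, hg, hV, hE, hlok⟩ := cycle_left h3
    refine ⟨⟨0, hlok⟩, ?_⟩
    show 0 ≤ classicG ((Finset.range n).erase 0) ((cycleE n).filter (fun e => 0 ∉ e))
    rw [← hV, ← hE]
    refine (key _ _ hg le_rfl).1 ?_
    rintro ⟨hall, hcount⟩
    have hc4 : c.length = 4 := by
      by_contra hne
      have h0 : ([c].map List.length).count 4 = 0 := by
        rw [List.count_eq_zero]
        simp only [List.map_cons, List.map_nil, List.mem_singleton]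
        omega
      omega
    omega
  exact PGame.lt_of_le_of_lf hle hlf

end MixedDeletion
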